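/- For every n ≥ 4 with n ≠ 6, the unidirectional oriented cycle C⃗_n is {0,3}-antimagic. -/
import Mathlib


open scoped Classical

/-- There is a directed walk of length `k` from `u` to `v` in the digraph with arc relation `A`. -/
def WalkLen {V : Type*} (A : V → V → Prop) : ℕ → V → V → Prop
  | 0, u, v => u = v
  | k + 1, u, v => ∃ w, A u w ∧ WalkLen A k w v

/-- The directed distance from `u` to `v` is exactly `k`
(i.e. `k` is the length of a shortest directed path from `u` to `v`). -/
def HasDist {V : Type*} (A : V → V → Prop) (u v : V) (k : ℕ) : Prop :=
  WalkLen A k u v ∧ ∀ m < k, ¬ WalkLen A m u v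

/-- `y` belongs to the `D`-neighborhood of `v`: the distance from `v` to `y` lies in `D`. -/
def InDNbhd {V : Type*} (A : V → V → Prop) (D : Set ℕ) (v y : V) : Prop :=
  ∃ k ∈ D, HasDist A v y k

/-- The `D`-weight of `v` under the labeling `f`: the sum of labels of the `D`-neighbors. -/
noncomputable def dWeight {V : Type*} [Fintype V] (A : V → V → Prop) (D : Set ℕ)
    (f : V → ℕ) (v : V) : ℕ :=
  ∑ y : V, if InDNbhd A D v y then f y else 0

/-- The digraph `(V, A)` is `D`-antimagic: some bijective labeling of the vertices by
`1, …, |V|` gives pairwise distinct `D`-weights. -/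
def DAntimagic (V : Type*) [Fintype V] (A : V → V → Prop) (D : Set ℕ) : Prop :=
  ∃ f : V ≃ Fin (Fintype.card V),
    Function.Injective fun v => dWeight A D (fun y => (f y : ℕ) + 1) v

/-- The orientation of the cycle `C_n` determined by `σ`: the edge between vertex `i` and
vertex `(i+1) mod n` is directed `i → i+1` when `σ i = true`, and `i+1 → i` otherwise. -/
def cycleArc (n : ℕ) (σ : Fin n → Bool) (u v : Fin n) : Prop :=
  (σ u = true ∧ (v : ℕ) = ((u : ℕ) + 1) % n) ∨
  (σ v = false ∧ (u : ℕ) = ((v : ℕ) + 1) % n)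

/-- The arc relation of the unidirectional oriented cycle `C⃗_n`: arcs `i → (i+1) mod n`. -/
def uniArc (n : ℕ) (u v : Fin n) : Prop :=
  (v : ℕ) = ((u : ℕ) + 1) % n

/-- An orientation of `C_n` is unidirectional if all edges are directed the same way around. -/
def Unidirectional (n : ℕ) (σ : Fin n → Bool) : Prop :=
  (∀ i, σ i = true) ∨ (∀ i, σ i = false)

/-- A sink: a vertex of out-degree 0. -/
def IsSink {V : Type*} (A : V → V → Prop) (u : V) : Prop :=
  ∀ v, ¬ A u v

/-- A source: a vertex of in-degree 0. -/
def IsSource {V : Type*} (A : V → V → Prop) (u : V) : Prop :=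
  ∀ v, ¬ A v u

/-- A digraph is Θ-oriented if it has exactly one sink and exactly one source, and
they are adjacent (so the arc between them goes from the source to the sink). -/
def ThetaOriented {V : Type*} (A : V → V → Prop) : Prop :=
  ∃ s t, IsSink A s ∧ IsSource A t ∧ (∀ u, IsSink A u → u = s) ∧
    (∀ u, IsSource A u → u = t) ∧ A t s

/-- The arc relation of the Θ-oriented cycle on `Fin n`:
arcs `i → i+1` for `0 ≤ i ≤ n-2`, together with the arc `0 → n-1`. -/
def thetaArc (n : ℕ) (u v : Fin n) : Prop :=
  ((v : ℕ) = (u : ℕ) + 1) ∨ ((u : ℕ) = 0 ∧ (v : ℕ) = n - 1)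

/-- The arc relation of a disjoint union of `c` oriented cycles, the `j`-th component having
`len j` vertices and arc relation `A j`. -/
def unionArc (c : ℕ) (len : Fin c → ℕ)
    (A : ∀ j, Fin (len j) → Fin (len j) → Prop)
    (u v : Σ j, Fin (len j)) : Prop :=
  ∃ h : u.1 = v.1, A v.1 (Fin.cast (congrArg len h) u.2) v.2

/-- For every `n ≥ 4` with `n ≠ 6`, the unidirectional `C⃗_n` is
`{0,3}`-antimagic. -/
private def bfun (m i : ℕ) : ℕ :=
  if m % 2 = 0 ∧ i + 2 = m then m - 1
  else if m % 2 = 0 ∧ i + 1 = m then m - 2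
  else i

private lemma bfun_lt {m i : ℕ} (h : i < m) : bfun m i < m := by
  unfold bfun; split_ifs <;> omega

private lemma bfun_inj {m i j : ℕ} (hi : i < m) (hj : j < m)
    (h : bfun m i = bfun m j) : i = j := by
  unfold bfun at h; split_ifs at h <;> omega

private lemma sfun_inj {m i j : ℕ} (h3 : 3 ≤ m)
    (hi : i < m) (hj : j < m)
    (h : bfun m i + bfun m ((i+1) % m) = bfun m j + bfun m ((j+1) % m)) : i = j := by
  have hi1 : (i+1) % m = if i + 1 = m then 0 else i + 1 := by
    split_ifs with h'
    · simp [h']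
    · exact Nat.mod_eq_of_lt (by omega)
  have hj1 : (j+1) % m = if j + 1 = m then 0 else j + 1 := by
    split_ifs with h'
    · simp [h']
    · exact Nat.mod_eq_of_lt (by omega)
  rw [hi1, hj1] at h
  by_cases him : i + 1 = m <;> by_cases hjm : j + 1 = m <;>
    simp only [him, hjm, if_pos, if_neg, if_true, if_false] at h <;>
    unfold bfun at h <;> split_ifs at h <;> omega

private lemma US_key {n m j i : ℕ} (hi : i < m) (c : ℕ) (hc : 3 * m = n * c) :
    (j + 3 * ((i + 1) % m)) % n = ((j + 3 * i) % n + 3) % n := by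
  rw [Nat.mod_add_mod]
  by_cases h2 : i + 1 = m
  · rw [h2, Nat.mod_self, Nat.mul_zero, Nat.add_zero]
    have h5 : j + 3 * i + 3 = j + n * c := by rw [← hc]; omega
    rw [h5, Nat.add_mul_mod_self_left]
  · rw [Nat.mod_eq_of_lt (by omega : i + 1 < m),
      show j + 3 * (i + 1) = j + 3 * i + 3 from by omega]

private lemma exists_good_equiv (n : ℕ) (hn : 4 ≤ n) (hne : n ≠ 6) :
    ∃ e : Fin n ≃ Fin n, ∀ v1 v2 : Fin n,
      (e v1 : ℕ) + (e ⟨((v1 : ℕ) + 3) % n, Nat.mod_lt _ (by omega)⟩ : ℕ) =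
        (e v2 : ℕ) + (e ⟨((v2 : ℕ) + 3) % n, Nat.mod_lt _ (by omega)⟩ : ℕ) →
      v1 = v2 := by
  have hn0 : 0 < n := by omega
  obtain ⟨m, hmdvd, c, hc, hm3, hUinj⟩ :
      ∃ m : ℕ, m ∣ n ∧ ∃ c : ℕ, 3 * m = n * c ∧ 3 ≤ m ∧
        ∀ k1 k2 : ℕ, k1 < n → k2 < n →
          (k1 / m + 3 * (k1 % m)) % n = (k2 / m + 3 * (k2 % m)) % n → k1 = k2 := by
    by_cases h3 : n % 3 = 0
    · have h9 : 9 ≤ n := by omega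
      refine ⟨n / 3, Nat.div_dvd_of_dvd ⟨n / 3, by omega⟩, 1, by omega, by omega, ?_⟩
      intro k1 k2 hk1 hk2 heq
      have hm0 : 0 < n / 3 := by omega
      obtain ⟨j1, i1, hj1, hi1, rfl⟩ : ∃ j i, j < 3 ∧ i < n / 3 ∧ k1 = (n / 3) * j + i :=
        ⟨k1 / (n / 3), k1 % (n / 3), by rw [Nat.div_lt_iff_lt_mul hm0]; omega,
          Nat.mod_lt _ hm0, (Nat.div_add_mod k1 (n / 3)).symm⟩
      obtain ⟨j2, i2, hj2, hi2, rfl⟩ : ∃ j i, j < 3 ∧ i < n / 3 ∧ k2 = (n / 3) * j + i :=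
        ⟨k2 / (n / 3), k2 % (n / 3), by rw [Nat.div_lt_iff_lt_mul hm0]; omega,
          Nat.mod_lt _ hm0, (Nat.div_add_mod k2 (n / 3)).symm⟩
      rw [Nat.mul_add_div hm0, Nat.mul_add_mod, Nat.div_eq_of_lt hi1, Nat.mod_eq_of_lt hi1,
          Nat.mul_add_div hm0, Nat.mul_add_mod, Nat.div_eq_of_lt hi2, Nat.mod_eq_of_lt hi2,
          Nat.add_zero, Nat.add_zero] at heq
      rw [Nat.mod_eq_of_lt (by omega), Nat.mod_eq_of_lt (by omega)] at heq
      have : j1 = j2 ∧ i1 = i2 := by omega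
      rw [this.1, this.2]
    · have hcop : Nat.Coprime 3 n :=
        Nat.prime_three.coprime_iff_not_dvd.mpr (by omega)
      refine ⟨n, dvd_refl n, 3, by ring, by omega, ?_⟩
      intro k1 k2 hk1 hk2 heq
      rw [Nat.div_eq_of_lt hk1, Nat.mod_eq_of_lt hk1, Nat.div_eq_of_lt hk2,
          Nat.mod_eq_of_lt hk2, Nat.zero_add, Nat.zero_add] at heq
      have hmeq : 3 * k1 ≡ 3 * k2 [MOD n] := heq
      have := Nat.ModEq.cancel_left_of_coprime hcop.symm hmeq
      have h' : k1 % n = k2 % n := this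
      rwa [Nat.mod_eq_of_lt hk1, Nat.mod_eq_of_lt hk2] at h'
  have hm0 : 0 < m := by omega
  have hGlt : ∀ k : ℕ, k < n → bfun m (k % m) + m * (k / m) < n := by
    intro k hk
    have h1 : bfun m (k % m) < m := bfun_lt (Nat.mod_lt _ hm0)
    have h2 : k / m < n / m := Nat.div_lt_div_of_lt_of_dvd hmdvd hk
    have h3 : m * (k / m + 1) ≤ m * (n / m) := Nat.mul_le_mul_left m h2
    have h4 : m * (k / m + 1) = m * (k / m) + m := by ring
    have h5 : m * (n / m) = n := Nat.mul_div_cancel' hmdvd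
    linarith
  have hSlt : ∀ k : ℕ, k < n → (k % m + 1) % m + m * (k / m) < n := by
    intro k hk
    have h1 : (k % m + 1) % m < m := Nat.mod_lt _ hm0
    have h2 : k / m < n / m := Nat.div_lt_div_of_lt_of_dvd hmdvd hk
    have h3 : m * (k / m + 1) ≤ m * (n / m) := Nat.mul_le_mul_left m h2
    have h4 : m * (k / m + 1) = m * (k / m) + m := by ring
    have h5 : m * (n / m) = n := Nat.mul_div_cancel' hmdvd
    linarith
  set U : Fin n → Fin n :=
    fun k => ⟨((k : ℕ) / m + 3 * ((k : ℕ) % m)) % n, Nat.mod_lt _ hn0⟩ with hUdef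
  set G : Fin n → Fin n :=
    fun k => ⟨bfun m ((k : ℕ) % m) + m * ((k : ℕ) / m), hGlt _ k.isLt⟩ with hGdef
  set S : Fin n → Fin n :=
    fun k => ⟨((k : ℕ) % m + 1) % m + m * ((k : ℕ) / m), hSlt _ k.isLt⟩ with hSdef
  -- div/mod of S k
  have hSdiv : ∀ k : Fin n, ((S k : Fin n) : ℕ) / m = (k : ℕ) / m := by
    intro k
    show (((k : ℕ) % m + 1) % m + m * ((k : ℕ) / m)) / m = (k : ℕ) / m
    rw [Nat.add_mul_div_left _ _ hm0, Nat.div_eq_of_lt (Nat.mod_lt _ hm0), Nat.zero_add]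
  have hSmod : ∀ k : Fin n, ((S k : Fin n) : ℕ) % m = ((k : ℕ) % m + 1) % m := by
    intro k
    show (((k : ℕ) % m + 1) % m + m * ((k : ℕ) / m)) % m = ((k : ℕ) % m + 1) % m
    rw [Nat.add_mul_mod_self_left, Nat.mod_eq_of_lt (Nat.mod_lt _ hm0)]
  have hUinj' : Function.Injective U := by
    intro k1 k2 h
    exact Fin.ext (hUinj _ _ k1.isLt k2.isLt (congrArg Fin.val h))
  have hGinj' : Function.Injective G := by
    intro k1 k2 h
    have h' : bfun m ((k1 : ℕ) % m) + m * ((k1 : ℕ) / m)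
        = bfun m ((k2 : ℕ) % m) + m * ((k2 : ℕ) / m) := congrArg Fin.val h
    have b1 : bfun m ((k1 : ℕ) % m) < m := bfun_lt (Nat.mod_lt _ hm0)
    have b2 : bfun m ((k2 : ℕ) % m) < m := bfun_lt (Nat.mod_lt _ hm0)
    have hj : (k1 : ℕ) / m = (k2 : ℕ) / m := by
      have e1 : (bfun m ((k1 : ℕ) % m) + m * ((k1 : ℕ) / m)) / m = (k1 : ℕ) / m := by
        rw [Nat.add_mul_div_left _ _ hm0, Nat.div_eq_of_lt b1, Nat.zero_add]
      have e2 : (bfun m ((k2 : ℕ) % m) + m * ((k2 : ℕ) / m)) / m = (k2 : ℕ) / m := by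
        rw [Nat.add_mul_div_left _ _ hm0, Nat.div_eq_of_lt b2, Nat.zero_add]
      rw [← e1, ← e2, h']
    have hb : bfun m ((k1 : ℕ) % m) = bfun m ((k2 : ℕ) % m) := by
      rw [hj] at h'
      exact Nat.add_right_cancel h'
    have hi : (k1 : ℕ) % m = (k2 : ℕ) % m :=
      bfun_inj (Nat.mod_lt _ hm0) (Nat.mod_lt _ hm0) hb
    apply Fin.ext
    rw [← Nat.div_add_mod (k1 : ℕ) m, ← Nat.div_add_mod (k2 : ℕ) m, hj, hi]
  have hUbij : Function.Bijective U := Finite.injective_iff_bijective.mp hUinj'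
  have hGbij : Function.Bijective G := Finite.injective_iff_bijective.mp hGinj'
  set eU := Equiv.ofBijective U hUbij with heU
  set eG := Equiv.ofBijective G hGbij with heG
  have hUS : ∀ k : Fin n, U (S k) = ⟨(((U k : Fin n) : ℕ) + 3) % n, Nat.mod_lt _ hn0⟩ := by
    intro k
    apply Fin.ext
    show (((S k : Fin n) : ℕ) / m + 3 * (((S k : Fin n) : ℕ) % m)) % n = _
    rw [hSdiv, hSmod]
    exact US_key (Nat.mod_lt _ hm0) c hc
  refine ⟨eU.symm.trans eG, ?_⟩
  intro v1 v2 h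
  simp only [Equiv.trans_apply] at h
  set a1 := eU.symm v1 with ha1
  set a2 := eU.symm v2 with ha2
  have hv1 : U a1 = v1 := eU.apply_symm_apply v1
  have hv2 : U a2 = v2 := eU.apply_symm_apply v2
  have hs1 : eU.symm ⟨((v1 : ℕ) + 3) % n, Nat.mod_lt _ hn0⟩ = S a1 := by
    have h2 : U (S a1) = ⟨(((U a1 : Fin n) : ℕ) + 3) % n, Nat.mod_lt _ hn0⟩ := hUS a1
    rw [hv1] at h2
    have h1 : eU (S a1) = ⟨((v1 : ℕ) + 3) % n, Nat.mod_lt _ hn0⟩ := h2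
    rw [← h1, Equiv.symm_apply_apply]
  have hs2 : eU.symm ⟨((v2 : ℕ) + 3) % n, Nat.mod_lt _ hn0⟩ = S a2 := by
    have h2 : U (S a2) = ⟨(((U a2 : Fin n) : ℕ) + 3) % n, Nat.mod_lt _ hn0⟩ := hUS a2
    rw [hv2] at h2
    have h1 : eU (S a2) = ⟨((v2 : ℕ) + 3) % n, Nat.mod_lt _ hn0⟩ := h2
    rw [← h1, Equiv.symm_apply_apply]
  rw [hs1, hs2] at h
  -- now h : (eG a1 : ℕ) + (eG (S a1) : ℕ) = (eG a2 : ℕ) + (eG (S a2) : ℕ)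
  have hGv : ∀ k : Fin n, (eG k : ℕ) = bfun m ((k : ℕ) % m) + m * ((k : ℕ) / m) := fun k => rfl
  rw [hGv, hGv, hGv, hGv, hSdiv, hSmod, hSdiv, hSmod] at h
  -- linear extraction
  have hi1 : (a1 : ℕ) % m < m := Nat.mod_lt _ hm0
  have hi2 : (a2 : ℕ) % m < m := Nat.mod_lt _ hm0
  obtain ⟨j1, i1, hj1e, hi1e, hi1lt⟩ : ∃ j i, (a1 : ℕ) / m = j ∧ (a1 : ℕ) % m = i ∧ i < m :=
    ⟨_, _, rfl, rfl, hi1⟩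
  obtain ⟨j2, i2, hj2e, hi2e, hi2lt⟩ : ∃ j i, (a2 : ℕ) / m = j ∧ (a2 : ℕ) % m = i ∧ i < m :=
    ⟨_, _, rfl, rfl, hi2⟩
  rw [hj1e, hi1e, hj2e, hi2e] at h
  -- h : (bfun m i1 + m * j1) + (bfun m ((i1+1)%m) + m * j1) = ...
  have b1 : bfun m i1 < m := bfun_lt hi1lt
  have b2 : bfun m i2 < m := bfun_lt hi2lt
  have b1' : bfun m ((i1 + 1) % m) < m := bfun_lt (Nat.mod_lt _ hm0)
  have b2' : bfun m ((i2 + 1) % m) < m := bfun_lt (Nat.mod_lt _ hm0)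
  have h' : (bfun m i1 + bfun m ((i1 + 1) % m)) + 2 * m * j1
      = (bfun m i2 + bfun m ((i2 + 1) % m)) + 2 * m * j2 := by linarith
  have hj : j1 = j2 := by
    have e1 : ((bfun m i1 + bfun m ((i1 + 1) % m)) + 2 * m * j1) / (2 * m) = j1 := by
      rw [Nat.add_mul_div_left _ _ (by omega : 0 < 2 * m), Nat.div_eq_of_lt (by omega),
        Nat.zero_add]
    have e2 : ((bfun m i2 + bfun m ((i2 + 1) % m)) + 2 * m * j2) / (2 * m) = j2 := by
      rw [Nat.add_mul_div_left _ _ (by omega : 0 < 2 * m), Nat.div_eq_of_lt (by omega),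
        Nat.zero_add]
    rw [← e1, ← e2, h']
  subst hj
  have hs : bfun m i1 + bfun m ((i1 + 1) % m) = bfun m i2 + bfun m ((i2 + 1) % m) :=
    Nat.add_right_cancel h'
  have hi : i1 = i2 := sfun_inj hm3 hi1lt hi2lt hs
  subst hi
  -- a1 = a2
  have haa : a1 = a2 := by
    apply Fin.ext
    rw [← Nat.div_add_mod (a1 : ℕ) m, ← Nat.div_add_mod (a2 : ℕ) m, hj1e, hj2e, hi1e, hi2e]
  rw [← hv1, ← hv2, haa]

private lemma walkLen_uniArc {n : ℕ} (hn : 0 < n) (k : ℕ) :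
    ∀ u v : Fin n, WalkLen (uniArc n) k u v ↔ (v : ℕ) = ((u : ℕ) + k) % n := by
  induction k with
  | zero =>
    intro u v
    simp only [WalkLen, Nat.add_zero]
    rw [Nat.mod_eq_of_lt u.isLt]
    exact ⟨fun h => by rw [h], fun h => (Fin.ext h).symm⟩
  | succ k ih =>
    intro u v
    simp only [WalkLen, uniArc]
    constructor
    · rintro ⟨w, hw, hwalk⟩
      rw [ih w v] at hwalk
      rw [hwalk, hw, Nat.mod_add_mod]
      congr 1
      omega
    · intro h
      refine ⟨⟨((u : ℕ) + 1) % n, Nat.mod_lt _ hn⟩, rfl, ?_⟩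
      rw [ih]
      simp only []
      rw [Nat.mod_add_mod]
      rw [h]
      congr 1
      omega

private lemma inDNbhd_uni {n : ℕ} (hn : 4 ≤ n) (v y : Fin n) :
    InDNbhd (uniArc n) {0, 3} v y ↔ (y = v ∨ (y : ℕ) = ((v : ℕ) + 3) % n) := by
  have hn0 : 0 < n := by omega
  constructor
  · rintro ⟨k, hk, hwalk, -⟩
    simp only [Set.mem_insert_iff, Set.mem_singleton_iff] at hk
    rcases hk with rfl | rfl
    · exact Or.inl (hwalk.symm)
    · exact Or.inr ((walkLen_uniArc hn0 3 v y).mp hwalk)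
  · rintro (rfl | h)
    · exact ⟨0, by simp, rfl, fun m hm => absurd hm (Nat.not_lt_zero m)⟩
    · refine ⟨3, by simp, (walkLen_uniArc hn0 3 v y).mpr h, ?_⟩
      intro m hm hw
      rw [walkLen_uniArc hn0 m v y] at hw
      have heq : ((v : ℕ) + 3) % n = ((v : ℕ) + m) % n := by rw [← h, hw]
      have h3 : (3 : ℕ) ≡ m [MOD n] := Nat.ModEq.add_left_cancel' (v : ℕ) heq
      have : 3 % n = m % n := h3
      rw [Nat.mod_eq_of_lt (by omega : 3 < n), Nat.mod_eq_of_lt (by omega : m < n)] at this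
      omega

private lemma dWeight_uniArc {n : ℕ} (hn : 4 ≤ n) (f : Fin n → ℕ) (v : Fin n) :
    dWeight (uniArc n) {0, 3} f v
      = f v + f ⟨((v : ℕ) + 3) % n, Nat.mod_lt _ (by omega)⟩ := by
  have hn0 : 0 < n := by omega
  set w : Fin n := ⟨((v : ℕ) + 3) % n, Nat.mod_lt _ (by omega)⟩ with hw
  have hvw : v ≠ w := by
    intro h
    have h1 : (v : ℕ) = ((v : ℕ) + 3) % n := congrArg Fin.val h
    have h2 : ((v : ℕ) + 0) % n = ((v : ℕ) + 3) % n := by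
      rw [Nat.add_zero, Nat.mod_eq_of_lt v.isLt]; exact h1
    have h3 : (0 : ℕ) ≡ 3 [MOD n] := Nat.ModEq.add_left_cancel' (v : ℕ) h2
    have : 0 % n = 3 % n := h3
    rw [Nat.zero_mod, Nat.mod_eq_of_lt (by omega : 3 < n)] at this
    omega
  have hset : ∀ y : Fin n, InDNbhd (uniArc n) {0, 3} v y ↔ y ∈ ({v, w} : Finset (Fin n)) := by
    intro y
    rw [inDNbhd_uni hn]
    simp [Fin.ext_iff, hw]
  rw [dWeight]
  calc (∑ y : Fin n, if InDNbhd (uniArc n) {0, 3} v y then f y else 0)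
      = ∑ y : Fin n, if y ∈ ({v, w} : Finset (Fin n)) then f y else 0 :=
        Finset.sum_congr rfl (fun y _ => if_congr (hset y) rfl rfl)
    _ = ∑ y ∈ ({v, w} : Finset (Fin n)), f y := by
        rw [Finset.sum_ite_mem, Finset.univ_inter]
    _ = f v + f w := Finset.sum_pair hvw

theorem uni_antimagic_zero_three (n : ℕ) (hn : 4 ≤ n) (hne : n ≠ 6) :
    DAntimagic (Fin n) (uniArc n) {0, 3} := by
  have hn0 : 0 < n := by omega
  obtain ⟨e, he⟩ := exists_good_equiv n hn hne
  refine ⟨e.trans (finCongr (Fintype.card_fin n).symm), ?_⟩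
  intro v1 v2 h
  simp only at h
  have hcoe : ∀ y : Fin n,
      ((e.trans (finCongr (Fintype.card_fin n).symm)) y : ℕ) = (e y : ℕ) := by
    intro y
    simp [finCongr]
  have hw : ∀ v : Fin n,
      dWeight (uniArc n) {0, 3}
          (fun y => ((e.trans (finCongr (Fintype.card_fin n).symm)) y : ℕ) + 1) v
        = ((e v : ℕ) + 1) + ((e ⟨((v : ℕ) + 3) % n, Nat.mod_lt _ (by omega)⟩ : ℕ) + 1) := by
    intro v
    rw [dWeight_uniArc hn]
    rw [hcoe, hcoe]
  rw [hw v1, hw v2] at h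
  exact he v1 v2 (by omega)
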